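/- Let α₋₁, α₀, α₁, α₂, σ > 0 and κ, ρ > 1 with κ + 1 > 2ρ. Define f(x) = α₋₁x⁻¹ − α₀ + α₁x − α₂x^κ and g(x) = σx^ρ for x > 0, so that g'(x)g(x) = ρσ²x^{2ρ−1}. Then for every h₀ > 0 there exist constants q ∈ (2, ∞), ϱ ∈ (1, ∞) and L₁ ∈ [0, ∞) such that for all x, y > 0 and all h ∈ (0, h₀]: 2(x − y)(f(x) − f(y)) + (q − 1)(g(x) − g(y))² + (ϱ/2)·h·(ρσ²x^{2ρ−1} − ρσ²y^{2ρ−1})² − h·(f(x) − f(y))² ≤ L₁ (x − y)². -/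

import Mathlib

set_option maxHeartbeats 2000000

open Real

lemma aux_lower_19 {p x y : ℝ} (hp : 1 ≤ p) (hy : 0 < y) (hxy : y ≤ x) :
    x ^ (p - 1) * (x - y) ≤ x ^ p - y ^ p := by
  have hx : 0 < x := lt_of_lt_of_le hy hxy
  have h1 : y ^ (p - 1) ≤ x ^ (p - 1) := Real.rpow_le_rpow hy.le hxy (by linarith)
  have h2 : y ^ p = y ^ (p - 1) * y := by
    rw [← Real.rpow_add_one hy.ne' (p-1)]; ring_nf
  have h3 : x ^ p = x ^ (p - 1) * x := by
    rw [← Real.rpow_add_one hx.ne' (p-1)]; ring_nf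
  have h4 : 0 < y ^ (p-1) := Real.rpow_pos_of_pos hy _
  nlinarith

lemma aux_upper_19 {p x y : ℝ} (hp : 1 ≤ p) (hy : 0 < y) (hxy : y ≤ x) :
    x ^ p - y ^ p ≤ p * x ^ (p - 1) * (x - y) := by
  have hx : 0 < x := lt_of_lt_of_le hy hxy
  have hs : -1 ≤ y / x - 1 := by
    have : 0 < y / x := div_pos hy hx
    linarith
  have hb := one_add_mul_self_le_rpow_one_add hs hp
  rw [show 1 + (y / x - 1) = y / x by ring] at hb
  rw [Real.div_rpow hy.le hx.le] at hb
  have hXp : 0 < x ^ p := Real.rpow_pos_of_pos hx p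
  have hpe : x ^ (p - 1) = x ^ p / x := by
    rw [Real.rpow_sub hx, Real.rpow_one]
  rw [hpe]
  have h1 : x ^ p * (1 + p * (y / x - 1)) ≤ y ^ p := by
    have := mul_le_mul_of_nonneg_left hb hXp.le
    calc x ^ p * (1 + p * (y / x - 1)) ≤ x ^ p * (y ^ p / x ^ p) := this
      _ = y ^ p := by field_simp
  have hxne : x ≠ 0 := hx.ne'
  have he1 : x ^ p * (1 + p * (y / x - 1)) = x ^ p + p * x ^ p * (y - x) / x := by
    field_simp
  rw [he1] at h1
  have he2 : p * (x ^ p / x) * (x - y) = -(p * x ^ p * (y - x) / x) := by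
    field_simp; ring
  linarith [he2.ge, he2.le]

lemma aux_young_19 {a b : ℝ} (ha : 0 ≤ a) (hab : a < b) {ε : ℝ} (hε : 0 < ε) :
    ∃ C, 0 ≤ C ∧ ∀ x : ℝ, 0 < x → x ^ a ≤ ε * x ^ b + C := by
  set M : ℝ := ε⁻¹ ^ (b - a)⁻¹ with hM
  have hMpos : 0 < M := Real.rpow_pos_of_pos (inv_pos.mpr hε) _
  refine ⟨M ^ a, (Real.rpow_pos_of_pos hMpos a).le, fun x hx => ?_⟩
  rcases le_total x M with hxM | hMx
  · have h1 : x ^ a ≤ M ^ a := Real.rpow_le_rpow hx.le hxM ha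
    have h2 : 0 ≤ ε * x ^ b := by positivity
    linarith
  · have hba : (0:ℝ) < b - a := by linarith
    have h1 : M ^ (b - a) ≤ x ^ (b - a) := Real.rpow_le_rpow hMpos.le hMx hba.le
    have h2 : M ^ (b - a) = ε⁻¹ := by
      rw [hM, ← Real.rpow_mul (inv_pos.mpr hε).le, inv_mul_cancel₀ hba.ne', Real.rpow_one]
    have h3 : x ^ a * ε⁻¹ ≤ x ^ a * x ^ (b - a) := by
      have : 0 ≤ x ^ a := (Real.rpow_pos_of_pos hx a).le
      nlinarith [h1, h2]
    rw [← Real.rpow_add hx] at h3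
    rw [show a + (b - a) = b by ring] at h3
    have hfin : x ^ a ≤ ε * x ^ b := by
      have := mul_le_mul_of_nonneg_left h3 hε.le
      calc x ^ a = ε * (x ^ a * ε⁻¹) := by field_simp
        _ ≤ ε * x ^ b := this
    have h5 : 0 < M ^ a := Real.rpow_pos_of_pos hMpos a
    linarith

lemma aux_core_19 (α₁ α₂ σ ρ h h₀' C₁ C₂ Δ A P G w s r r4 W2 J D : ℝ)
    (hρ : 1 < ρ) (hσ : 0 < σ) (hα₂ : 0 < α₂)
    (hC₂0 : 0 ≤ C₂)
    (hΔ : 0 ≤ Δ) (hA0 : 0 ≤ A) (hA2 : w * Δ ≤ A) (hw0 : 0 ≤ w)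
    (hW2 : w * w = W2) (hP0 : 0 ≤ P) (hP : P ≤ ρ * s * Δ) (hs0 : 0 ≤ s)
    (hs : s * s = r) (hG0 : 0 ≤ G) (hG : G ≤ (2*ρ-1) * r * Δ) (hr0 : 0 ≤ r)
    (hr : r * r = r4)
    (hY1 : σ^2*ρ^2*r ≤ α₂*w + σ^2*ρ^2*C₁)
    (hY2 : ρ^2*σ^4*(2*ρ-1)^2*r4 ≤ α₂^2/2*W2 + ρ^2*σ^4*(2*ρ-1)^2*C₂)
    (hJ : 0 ≤ J) (hD : D = α₁*Δ - α₂*A - J)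
    (hh : 0 < h) (hhb : h ≤ h₀') :
    2*Δ*D + 2*σ^2*P^2 + h*(ρ^2*σ^4)*G^2 - h*D^2
      ≤ (2*α₁ + 2*σ^2*ρ^2*C₁ + h₀'*(ρ^2*σ^4*(2*ρ-1)^2*C₂ + α₁^2)) * Δ^2 := by
  have hρ0 : (0:ℝ) < ρ := by linarith
  have hK₂ : 0 ≤ ρ^2*σ^4*(2*ρ-1)^2*C₂ + α₁^2 :=
    add_nonneg (mul_nonneg (by positivity) hC₂0) (sq_nonneg α₁)
  have s1 : P^2 ≤ ρ^2*r*Δ^2 := by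
    have heq : ρ*s*Δ*(ρ*s*Δ) = ρ^2*r*Δ^2 := by rw [← hs]; ring
    have := mul_le_mul hP hP hP0 (mul_nonneg (mul_nonneg hρ0.le hs0) hΔ)
    linarith [this, heq]
  have s2 : 2*σ^2*P^2 ≤ 2*α₂*(Δ*A) + 2*σ^2*ρ^2*C₁*Δ^2 := by
    have u1 : σ^2*ρ^2*r*Δ^2 ≤ (α₂*w + σ^2*ρ^2*C₁)*Δ^2 :=
      mul_le_mul_of_nonneg_right hY1 (sq_nonneg Δ)
    have u3 : w*Δ*Δ ≤ A*Δ := mul_le_mul_of_nonneg_right hA2 hΔ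
    have u3' : 2*α₂*(w*Δ*Δ) ≤ 2*α₂*(A*Δ) :=
      mul_le_mul_of_nonneg_left u3 (by positivity)
    have s1' : 2*σ^2*P^2 ≤ 2*σ^2*(ρ^2*r*Δ^2) :=
      mul_le_mul_of_nonneg_left s1 (by positivity)
    linarith
  have s3 : ρ^2*σ^4*G^2 ≤ D^2 + (ρ^2*σ^4*(2*ρ-1)^2*C₂ + α₁^2)*Δ^2 := by
    have g1 : G^2 ≤ (2*ρ-1)^2*r4*Δ^2 := by
      have heq : (2*ρ-1)*r*Δ*((2*ρ-1)*r*Δ) = (2*ρ-1)^2*r4*Δ^2 := by rw [← hr]; ring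
      have := mul_le_mul hG hG hG0
        (mul_nonneg (mul_nonneg (by linarith : (0:ℝ) ≤ 2*ρ-1) hr0) hΔ)
      linarith [this, heq]
    have g1' : ρ^2*σ^4*G^2 ≤ ρ^2*σ^4*((2*ρ-1)^2*r4*Δ^2) :=
      mul_le_mul_of_nonneg_left g1 (by positivity)
    have g2 : ρ^2*σ^4*(2*ρ-1)^2*r4*Δ^2 ≤ (α₂^2/2*W2 + ρ^2*σ^4*(2*ρ-1)^2*C₂)*Δ^2 :=
      mul_le_mul_of_nonneg_right hY2 (sq_nonneg Δ)
    have g4 : α₂^2*A^2/2 - α₁^2*Δ^2 ≤ D^2 := by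
      rw [hD]
      nlinarith [sq_nonneg (α₂*A + J - 2*α₁*Δ), mul_nonneg hJ (mul_nonneg hα₂.le hA0),
        sq_nonneg J]
    have g5 : W2*Δ^2 ≤ A^2 := by
      have heq : w*Δ*(w*Δ) = W2*Δ^2 := by rw [← hW2]; ring
      have := mul_le_mul hA2 hA2 (mul_nonneg hw0 hΔ) hA0
      linarith [this, heq]
    have g5' : α₂^2/2*(W2*Δ^2) ≤ α₂^2/2*A^2 :=
      mul_le_mul_of_nonneg_left g5 (by positivity)
    linarith
  have s4 : h*(ρ^2*σ^4)*G^2 - h*D^2 ≤ h₀'*(ρ^2*σ^4*(2*ρ-1)^2*C₂ + α₁^2)*Δ^2 := by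
    have e1 : ρ^2*σ^4*G^2 - D^2 ≤ (ρ^2*σ^4*(2*ρ-1)^2*C₂ + α₁^2)*Δ^2 := by linarith
    have e2 := mul_le_mul_of_nonneg_left e1 hh.le
    have e3 : h*((ρ^2*σ^4*(2*ρ-1)^2*C₂ + α₁^2)*Δ^2)
        ≤ h₀'*((ρ^2*σ^4*(2*ρ-1)^2*C₂ + α₁^2)*Δ^2) :=
      mul_le_mul_of_nonneg_right hhb (mul_nonneg hK₂ (sq_nonneg Δ))
    linarith
  have s5 : 2*Δ*D ≤ 2*α₁*Δ^2 - 2*α₂*(Δ*A) := by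
    rw [hD]; nlinarith [mul_nonneg hΔ hJ]
  linarith

/-- Full generalized monotonicity condition (θ = 1, η = 0) for the Ait-Sahalia model
in the standard regime κ + 1 > 2ρ; no parameter restriction beyond positivity. -/
theorem stmt_19 (αm1 α₀ α₁ α₂ σ κ ρ : ℝ)
    (hm1 : 0 < αm1) (h₀ : 0 < α₀) (h₁ : 0 < α₁) (h₂ : 0 < α₂) (hσ : 0 < σ)
    (hκ : 1 < κ) (hρ : 1 < ρ) (hreg : κ + 1 > 2 * ρ) :
    ∀ h₀' : ℝ, 0 < h₀' →
      ∃ q : ℝ, 2 < q ∧ ∃ ϱ : ℝ, 1 < ϱ ∧ ∃ L₁ : ℝ, 0 ≤ L₁ ∧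
        ∀ x y h : ℝ, 0 < x → 0 < y → 0 < h → h ≤ h₀' →
          2 * (x - y) * ((αm1 * x⁻¹ - α₀ + α₁ * x - α₂ * x ^ κ)
              - (αm1 * y⁻¹ - α₀ + α₁ * y - α₂ * y ^ κ))
            + (q - 1) * (σ * x ^ ρ - σ * y ^ ρ)^2
            + (ϱ / 2) * h * (ρ * σ^2 * x ^ (2 * ρ - 1) - ρ * σ^2 * y ^ (2 * ρ - 1))^2
            - h * ((αm1 * x⁻¹ - α₀ + α₁ * x - α₂ * x ^ κ)
              - (αm1 * y⁻¹ - α₀ + α₁ * y - α₂ * y ^ κ))^2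
          ≤ L₁ * (x - y)^2 := by
  intro h₀' hh₀'
  have hρ0 : (0:ℝ) < ρ := by linarith
  have hσρ : (0:ℝ) < σ^2 * ρ^2 := by positivity
  have hden2 : (0:ℝ) < 2 * ρ^2 * σ^4 * (2*ρ-1)^2 := by
    have : (0:ℝ) < 2*ρ-1 := by linarith
    positivity
  have hε₁ : (0:ℝ) < α₂ / (σ^2 * ρ^2) := div_pos h₂ hσρ
  have hε₂ : (0:ℝ) < α₂^2 / (2 * ρ^2 * σ^4 * (2*ρ-1)^2) := div_pos (by positivity) hden2
  obtain ⟨C₁, hC₁0, hC₁⟩ := aux_young_19 (a := 2*ρ-2) (b := κ-1)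
    (by linarith) (by linarith) hε₁
  obtain ⟨C₂, hC₂0, hC₂⟩ := aux_young_19 (a := 4*ρ-4) (b := 2*κ-2)
    (by linarith) (by linarith) hε₂
  refine ⟨3, by norm_num, 2, by norm_num, 2*α₁ + 2*σ^2*ρ^2*C₁
      + h₀'*(ρ^2*σ^4*(2*ρ-1)^2*C₂ + α₁^2), by positivity, ?_⟩
  -- key ordered case
  have key : ∀ x y h : ℝ, 0 < y → y ≤ x → 0 < h → h ≤ h₀' →
      2 * (x - y) * ((αm1 * x⁻¹ - α₀ + α₁ * x - α₂ * x ^ κ)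
          - (αm1 * y⁻¹ - α₀ + α₁ * y - α₂ * y ^ κ))
        + ((3:ℝ) - 1) * (σ * x ^ ρ - σ * y ^ ρ)^2
        + ((2:ℝ) / 2) * h * (ρ * σ^2 * x ^ (2 * ρ - 1) - ρ * σ^2 * y ^ (2 * ρ - 1))^2
        - h * ((αm1 * x⁻¹ - α₀ + α₁ * x - α₂ * x ^ κ)
          - (αm1 * y⁻¹ - α₀ + α₁ * y - α₂ * y ^ κ))^2
      ≤ (2*α₁ + 2*σ^2*ρ^2*C₁ + h₀'*(ρ^2*σ^4*(2*ρ-1)^2*C₂ + α₁^2)) * (x - y)^2 := by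
    intro x y h hy hxy hh hhb
    have hx : 0 < x := lt_of_lt_of_le hy hxy
    have hΔ : 0 ≤ x - y := by linarith
    have hA0 : 0 ≤ x ^ κ - y ^ κ := by
      have := Real.rpow_le_rpow hy.le hxy (by linarith : (0:ℝ) ≤ κ); linarith
    have hA2 : x ^ (κ-1) * (x - y) ≤ x ^ κ - y ^ κ := aux_lower_19 hκ.le hy hxy
    have hP0 : 0 ≤ x ^ ρ - y ^ ρ := by
      have := Real.rpow_le_rpow hy.le hxy (by linarith : (0:ℝ) ≤ ρ); linarith
    have hP : x ^ ρ - y ^ ρ ≤ ρ * x ^ (ρ-1) * (x - y) := aux_upper_19 hρ.le hy hxy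
    have hG0 : 0 ≤ x ^ (2*ρ-1) - y ^ (2*ρ-1) := by
      have := Real.rpow_le_rpow hy.le hxy (by linarith : (0:ℝ) ≤ 2*ρ-1); linarith
    have hG : x ^ (2*ρ-1) - y ^ (2*ρ-1) ≤ (2*ρ-1) * x ^ (2*ρ-2) * (x - y) := by
      have := aux_upper_19 (p := 2*ρ-1) (by linarith) hy hxy
      rw [show (2*ρ-1) - 1 = 2*ρ-2 by ring] at this
      exact this
    have hss : x ^ (ρ-1) * x ^ (ρ-1) = x ^ (2*ρ-2) := by
      rw [← Real.rpow_add hx]; ring_nf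
    have hww : x ^ (κ-1) * x ^ (κ-1) = x ^ (2*κ-2) := by
      rw [← Real.rpow_add hx]; ring_nf
    have hrr : x ^ (2*ρ-2) * x ^ (2*ρ-2) = x ^ (4*ρ-4) := by
      rw [← Real.rpow_add hx]; ring_nf
    have hw0 : (0:ℝ) ≤ x ^ (κ-1) := (Real.rpow_pos_of_pos hx _).le
    have hs0 : (0:ℝ) ≤ x ^ (ρ-1) := (Real.rpow_pos_of_pos hx _).le
    have hr0 : (0:ℝ) ≤ x ^ (2*ρ-2) := (Real.rpow_pos_of_pos hx _).le
    have hinv : x⁻¹ ≤ y⁻¹ := by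
      rw [inv_le_inv₀ hx hy]; exact hxy
    have hJ : 0 ≤ αm1 * (y⁻¹ - x⁻¹) := mul_nonneg hm1.le (by linarith)
    have hY1 : σ^2*ρ^2*(x ^ (2*ρ-2)) ≤ α₂*(x ^ (κ-1)) + σ^2*ρ^2*C₁ := by
      have h1 := mul_le_mul_of_nonneg_left (hC₁ x hx) hσρ.le
      have h2 : σ^2*ρ^2*((α₂ / (σ^2 * ρ^2)) * x ^ (κ-1) + C₁)
          = α₂*(x ^ (κ-1)) + σ^2*ρ^2*C₁ := by
        field_simp
      linarith [h2.le, h2.ge]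
    have hY2 : ρ^2*σ^4*(2*ρ-1)^2*(x ^ (4*ρ-4))
        ≤ α₂^2/2*(x ^ (2*κ-2)) + ρ^2*σ^4*(2*ρ-1)^2*C₂ := by
      have h1 := mul_le_mul_of_nonneg_left (hC₂ x hx) (by positivity : (0:ℝ) ≤ ρ^2*σ^4*(2*ρ-1)^2)
      have h2 : ρ^2*σ^4*(2*ρ-1)^2*((α₂^2 / (2 * ρ^2 * σ^4 * (2*ρ-1)^2)) * x ^ (2*κ-2) + C₂)
          = α₂^2/2*(x ^ (2*κ-2)) + ρ^2*σ^4*(2*ρ-1)^2*C₂ := by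
        have hne : (2*ρ-1) ≠ 0 := by
          have : (0:ℝ) < 2*ρ-1 := by linarith
          exact this.ne'
        have e : ρ^2*σ^4*(2*ρ-1)^2 * (α₂^2 / (2 * ρ^2 * σ^4 * (2*ρ-1)^2)) = α₂^2/2 := by
          rw [mul_div_assoc', div_eq_div_iff (ne_of_gt hden2) two_ne_zero]; ring
        linear_combination (x ^ (2*κ-2)) * e
      linarith [h2.le, h2.ge]
    have core := aux_core_19 α₁ α₂ σ ρ h h₀' C₁ C₂ (x - y)
      (x ^ κ - y ^ κ) (x ^ ρ - y ^ ρ) (x ^ (2*ρ-1) - y ^ (2*ρ-1))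
      (x ^ (κ-1)) (x ^ (ρ-1)) (x ^ (2*ρ-2)) (x ^ (4*ρ-4)) (x ^ (2*κ-2))
      (αm1 * (y⁻¹ - x⁻¹))
      ((αm1 * x⁻¹ - α₀ + α₁ * x - α₂ * x ^ κ)
          - (αm1 * y⁻¹ - α₀ + α₁ * y - α₂ * y ^ κ))
      hρ hσ h₂ hC₂0 hΔ hA0 hA2 hw0 hww hP0 hP hs0 hss hG0 hG hr0 hrr
      hY1 hY2 hJ (by ring) hh hhb
    calc 2 * (x - y) * ((αm1 * x⁻¹ - α₀ + α₁ * x - α₂ * x ^ κ)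
          - (αm1 * y⁻¹ - α₀ + α₁ * y - α₂ * y ^ κ))
        + ((3:ℝ) - 1) * (σ * x ^ ρ - σ * y ^ ρ)^2
        + ((2:ℝ) / 2) * h * (ρ * σ^2 * x ^ (2 * ρ - 1) - ρ * σ^2 * y ^ (2 * ρ - 1))^2
        - h * ((αm1 * x⁻¹ - α₀ + α₁ * x - α₂ * x ^ κ)
          - (αm1 * y⁻¹ - α₀ + α₁ * y - α₂ * y ^ κ))^2
        = 2*(x - y)*((αm1 * x⁻¹ - α₀ + α₁ * x - α₂ * x ^ κ)
          - (αm1 * y⁻¹ - α₀ + α₁ * y - α₂ * y ^ κ))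
          + 2*σ^2*(x ^ ρ - y ^ ρ)^2
          + h*(ρ^2*σ^4)*(x ^ (2*ρ-1) - y ^ (2*ρ-1))^2
          - h*((αm1 * x⁻¹ - α₀ + α₁ * x - α₂ * x ^ κ)
          - (αm1 * y⁻¹ - α₀ + α₁ * y - α₂ * y ^ κ))^2 := by ring
      _ ≤ _ := core
  intro x y h hx hy hh hhb
  rcases le_total y x with hxy | hxy
  · exact key x y h hy hxy hh hhb
  · have hsym := key y x h hx hxy hh hhb
    have heq : 2 * (x - y) * ((αm1 * x⁻¹ - α₀ + α₁ * x - α₂ * x ^ κ)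
          - (αm1 * y⁻¹ - α₀ + α₁ * y - α₂ * y ^ κ))
        + ((3:ℝ) - 1) * (σ * x ^ ρ - σ * y ^ ρ)^2
        + ((2:ℝ) / 2) * h * (ρ * σ^2 * x ^ (2 * ρ - 1) - ρ * σ^2 * y ^ (2 * ρ - 1))^2
        - h * ((αm1 * x⁻¹ - α₀ + α₁ * x - α₂ * x ^ κ)
          - (αm1 * y⁻¹ - α₀ + α₁ * y - α₂ * y ^ κ))^2
        = 2 * (y - x) * ((αm1 * y⁻¹ - α₀ + α₁ * y - α₂ * y ^ κ)
          - (αm1 * x⁻¹ - α₀ + α₁ * x - α₂ * x ^ κ))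
        + ((3:ℝ) - 1) * (σ * y ^ ρ - σ * x ^ ρ)^2
        + ((2:ℝ) / 2) * h * (ρ * σ^2 * y ^ (2 * ρ - 1) - ρ * σ^2 * x ^ (2 * ρ - 1))^2
        - h * ((αm1 * y⁻¹ - α₀ + α₁ * y - α₂ * y ^ κ)
          - (αm1 * x⁻¹ - α₀ + α₁ * x - α₂ * x ^ κ))^2 := by ring
    rw [heq]
    calc _ ≤ (2*α₁ + 2*σ^2*ρ^2*C₁ + h₀'*(ρ^2*σ^4*(2*ρ-1)^2*C₂ + α₁^2)) * (y - x)^2 := hsym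
      _ = (2*α₁ + 2*σ^2*ρ^2*C₁ + h₀'*(ρ^2*σ^4*(2*ρ-1)^2*C₂ + α₁^2)) * (x - y)^2 := by ring
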